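/- arXiv:1002.5007 — 3 statements merged into one kernel-verified Lean document; each statement's English description precedes it below -/
import Mathlib

section
/- Let π be a uniformizer of F and let u ∈ 𝒪^× be a unit whose residue res(u) is not a square in 𝔽. Then the product {u}·{π} is nonzero in k^M(F), i.e. {u}·{π} ∉ J. -/
/-- A nondyadic `p`-adic field packaged as data: a field `F` of characteristic zero,
complete with respect to a surjective discrete valuation `v : Fˣ → ℤ`, with valuation
ring `O`, residue field `K` (finite of odd cardinality in applications), and residue
(quotient) map `res : O →+* K` whose kernel is the maximal ideal `𝔪 = {x : v x ≥ 1}`. -/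
structure PadicData (F K : Type) [Field F] [Field K] where
  v : Fˣ → ℤ
  v_mul : ∀ x y : Fˣ, v (x * y) = v x + v y
  v_surj : Function.Surjective v
  v_ultra : ∀ (x y : Fˣ) (h : (x : F) + (y : F) ≠ 0),
      min (v x) (v y) ≤ v (Units.mk0 ((x : F) + (y : F)) h)
  O : Subring F
  mem_O : ∀ x : F, x ∈ O ↔ ∀ h : x ≠ 0, 0 ≤ v (Units.mk0 x h)
  res : O →+* K
  res_surj : Function.Surjective res
  res_eq_zero : ∀ x : O, res x = 0 ↔ ∀ h : (x : F) ≠ 0, 1 ≤ v (Units.mk0 (x : F) h)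
  complete : ∀ f : ℕ → F,
      (∀ N : ℤ, ∃ M : ℕ, ∀ m, M ≤ m → ∀ n, M ≤ n → ∀ h : f m - f n ≠ 0,
        N ≤ v (Units.mk0 (f m - f n) h)) →
      ∃ a : F, ∀ N : ℤ, ∃ M : ℕ, ∀ n, M ≤ n → ∀ h : f n - a ≠ 0,
        N ≤ v (Units.mk0 (f n - a) h)
/-- The defining relations of mod 2 Milnor K-theory on the tensor algebra
`T(F^×)` (over `ℤ`, with `F^×` written additively): the Steinberg elements
`{a}·{1−a}` for `a ∈ F^× \ {1}` are set to `0`, and `2·1` is set to `0`.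
Quotienting by `MilnorRel` realizes the quotient by the two-sided ideal `J`
generated by these elements. -/
inductive MilnorRel (F : Type) [Field F] :
    TensorAlgebra ℤ (Additive Fˣ) → TensorAlgebra ℤ (Additive Fˣ) → Prop
  | steinberg (a : Fˣ) (h : (1 : F) - (a : F) ≠ 0) :
      MilnorRel F
        (TensorAlgebra.ι ℤ (Additive.ofMul a) *
          TensorAlgebra.ι ℤ (Additive.ofMul (Units.mk0 ((1 : F) - (a : F)) h))) 0
  | mod2 : MilnorRel F (2 : TensorAlgebra ℤ (Additive Fˣ)) 0

/-- Mod 2 Milnor K-theory `k^M(F) = T(F^×)/J`. -/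
abbrev MilnorK (F : Type) [Field F] := RingQuot (MilnorRel F)

/-- The degree-one class `{a}` of `a ∈ F^×` in mod 2 Milnor K-theory. -/
noncomputable def kcls {F : Type} [Field F] (a : Fˣ) : MilnorK F :=
  RingQuot.mkRingHom (MilnorRel F) (TensorAlgebra.ι ℤ (Additive.ofMul a))

namespace Aux

variable {F K : Type} [Field F] [Field K] [Fintype K]

lemma v_one (D : PadicData F K) : D.v 1 = 0 := by
  have := D.v_mul 1 1; simpa using this.symm

lemma v_inv (D : PadicData F K) (a : Fˣ) : D.v a⁻¹ = - D.v a := by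
  have := D.v_mul a a⁻¹
  rw [mul_inv_cancel, v_one] at this
  omega

/-- v as a monoid hom to Multiplicative ℤ -/
def vhom (D : PadicData F K) : Fˣ →* Multiplicative ℤ where
  toFun x := Multiplicative.ofAdd (D.v x)
  map_one' := by simp [v_one D]
  map_mul' x y := by
    show Multiplicative.ofAdd (D.v (x * y))
        = Multiplicative.ofAdd (D.v x) * Multiplicative.ofAdd (D.v y)
    rw [D.v_mul]
    rfl

lemma v_zpow (D : PadicData F K) (a : Fˣ) (k : ℤ) : D.v (a ^ k) = k * D.v a := by
  have := map_zpow (vhom D) a k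
  have h2 : Multiplicative.toAdd ((vhom D) (a ^ k)) = Multiplicative.toAdd ((vhom D) a ^ k) := by
    rw [this]
  simpa [vhom, toAdd_zpow, smul_eq_mul] using h2

lemma v_mk0_unit (D : PadicData F K) (a : Fˣ) (h : (a : F) ≠ 0) :
    D.v (Units.mk0 (a : F) h) = D.v a := by
  congr 1; exact Units.ext rfl

lemma v_neg_one (D : PadicData F K) : D.v (-1) = 0 := by
  have := D.v_mul (-1) (-1)
  simp only [neg_mul, one_mul, neg_neg, v_one D] at this
  omega

lemma v_neg (D : PadicData F K) (a : Fˣ) : D.v (-a) = D.v a := by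
  have := D.v_mul (-1) a
  simpa [v_neg_one D] using this

lemma mem_O_of_v (D : PadicData F K) (a : Fˣ) (ha : 0 ≤ D.v a) : (a : F) ∈ D.O := by
  rw [D.mem_O]; intro h; rwa [v_mk0_unit]

lemma res_eq_zero_of_v (D : PadicData F K) (a : Fˣ) (ha : 1 ≤ D.v a)
    (hm : (a : F) ∈ D.O) : D.res ⟨(a : F), hm⟩ = 0 := by
  rw [D.res_eq_zero]; intro h; rwa [v_mk0_unit]

lemma res_ne_zero_of_v (D : PadicData F K) (a : Fˣ) (ha : D.v a = 0)
    (hm : (a : F) ∈ D.O) : D.res ⟨(a : F), hm⟩ ≠ 0 := by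
  intro hc
  have h2 := (D.res_eq_zero ⟨(a : F), hm⟩).mp hc a.ne_zero
  rw [v_mk0_unit] at h2
  omega

/-- the unit part of `a` w.r.t. uniformizer `π` -/
def unitPart (D : PadicData F K) (π : Fˣ) (a : Fˣ) : Fˣ := a * π ^ (-(D.v a))

lemma v_unitPart (D : PadicData F K) (π : Fˣ) (hπ : D.v π = 1) (a : Fˣ) :
    D.v (unitPart D π a) = 0 := by
  rw [unitPart, D.v_mul, v_zpow, hπ]; ring

lemma unitPart_mem (D : PadicData F K) (π : Fˣ) (hπ : D.v π = 1) (a : Fˣ) :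
    ((unitPart D π a : Fˣ) : F) ∈ D.O :=
  mem_O_of_v D _ (by rw [v_unitPart D π hπ])

lemma unitPart_mul (D : PadicData F K) (π : Fˣ) (a b : Fˣ) :
    unitPart D π (a * b) = unitPart D π a * unitPart D π b := by
  rw [unitPart, unitPart, unitPart, D.v_mul, neg_add, zpow_add]
  exact mul_mul_mul_comm a b _ _

lemma unitPart_of_v_zero (D : PadicData F K) (π : Fˣ) (a : Fˣ) (ha : D.v a = 0) :
    unitPart D π a = a := by
  rw [unitPart, ha, neg_zero, zpow_zero, mul_one]

/-- residue of the unit part -/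
noncomputable def resU (D : PadicData F K) (π : Fˣ) (hπ : D.v π = 1) (a : Fˣ) : K :=
  D.res ⟨((unitPart D π a : Fˣ) : F), unitPart_mem D π hπ a⟩

lemma resU_ne_zero (D : PadicData F K) (π : Fˣ) (hπ : D.v π = 1) (a : Fˣ) :
    resU D π hπ a ≠ 0 :=
  res_ne_zero_of_v D _ (v_unitPart D π hπ a) _

lemma resU_mul (D : PadicData F K) (π : Fˣ) (hπ : D.v π = 1) (a b : Fˣ) :
    resU D π hπ (a * b) = resU D π hπ a * resU D π hπ b := by
  unfold resU
  rw [show (⟨((unitPart D π (a * b) : Fˣ) : F), unitPart_mem D π hπ (a * b)⟩ : D.O)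
      = ⟨((unitPart D π a : Fˣ) : F), unitPart_mem D π hπ a⟩ *
        ⟨((unitPart D π b : Fˣ) : F), unitPart_mem D π hπ b⟩
      from Subtype.ext (congrArg Units.val (unitPart_mul D π a b)), map_mul]

open Classical in
/-- the additive quadratic character of the unit part -/
noncomputable def cc (D : PadicData F K) (π : Fˣ) (hπ : D.v π = 1) (a : Fˣ) : ZMod 2 :=
  if IsSquare (resU D π hπ a) then 0 else 1

open Classical in
lemma isSq_add (x y : K) (hx : x ≠ 0) (hy : y ≠ 0) :
    (if IsSquare (x * y) then (0 : ZMod 2) else 1) =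
      (if IsSquare x then (0 : ZMod 2) else 1) + (if IsSquare y then 0 else 1) := by
  have hxy : x * y ≠ 0 := mul_ne_zero hx hy
  have hmul : quadraticChar K (x * y) = quadraticChar K x * quadraticChar K y := map_mul _ _ _
  have key : ∀ z : K, z ≠ 0 →
      (if IsSquare z then (0 : ZMod 2) else 1)
        = (if quadraticChar K z = 1 then 0 else 1) := by
    intro z hz
    by_cases h : IsSquare z
    · rw [if_pos h, if_pos ((quadraticChar_one_iff_isSquare hz).mpr h)]
    · rw [if_neg h, if_neg (fun hc => h ((quadraticChar_one_iff_isSquare hz).mp hc))]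
  rw [key _ hxy, key _ hx, key _ hy]
  rcases quadraticChar_dichotomy hx with h1 | h1 <;>
    rcases quadraticChar_dichotomy hy with h2 | h2 <;>
    rw [hmul, h1, h2] <;> decide

lemma cc_mul (D : PadicData F K) (π : Fˣ) (hπ : D.v π = 1) (a b : Fˣ) :
    cc D π hπ (a * b) = cc D π hπ a + cc D π hπ b := by
  unfold cc
  rw [resU_mul]
  exact isSq_add _ _ (resU_ne_zero D π hπ a) (resU_ne_zero D π hπ b)

lemma cc_one (D : PadicData F K) (π : Fˣ) (hπ : D.v π = 1) :
    cc D π hπ 1 = 0 := by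
  have h := cc_mul D π hπ 1 1
  rw [mul_one] at h
  -- cc 1 = cc 1 + cc 1
  have : cc D π hπ 1 + cc D π hπ 1 = cc D π hπ 1 + 0 := by rw [add_zero]; exact h.symm
  exact (add_left_cancel this)

lemma ultra' (D : PadicData F K) (x y c : Fˣ) (e : (x : F) + (y : F) = (c : F)) :
    min (D.v x) (D.v y) ≤ D.v c := by
  have hne : (x : F) + (y : F) ≠ 0 := by rw [e]; exact c.ne_zero
  have h1 := D.v_ultra x y hne
  have e2 : Units.mk0 ((x : F) + (y : F)) hne = c := Units.ext e
  rwa [e2] at h1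

/-- the valuation mod 2 -/
def mfun (D : PadicData F K) (a : Fˣ) : ZMod 2 := (D.v a : ZMod 2)

lemma mfun_mul (D : PadicData F K) (a b : Fˣ) :
    mfun D (a * b) = mfun D a + mfun D b := by
  rw [mfun, mfun, mfun, D.v_mul, Int.cast_add]

open Classical in
/-- additive quadratic character of -1 in the residue field -/
noncomputable def sK (K : Type) [Field K] : ZMod 2 :=
  if IsSquare ((-1 : K)) then 0 else 1

lemma resU_of_v_zero (D : PadicData F K) (π : Fˣ) (hπ : D.v π = 1) (a : Fˣ)
    (hva : D.v a = 0) (hm : (a : F) ∈ D.O) :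
    resU D π hπ a = D.res ⟨(a : F), hm⟩ :=
  congrArg D.res (Subtype.ext (congrArg Units.val (unitPart_of_v_zero D π a hva)))

section Steinberg

variable (D : PadicData F K) (π : Fˣ) (hπ : D.v π = 1)
variable (a : Fˣ) (h : (1 : F) - (a : F) ≠ 0)

lemma vb_lower : min 0 (D.v a) ≤ D.v (Units.mk0 ((1 : F) - (a : F)) h) := by
  have e : ((1 : Fˣ) : F) + ((-a : Fˣ) : F) = ((Units.mk0 ((1 : F) - (a : F)) h : Fˣ) : F) := by
    simp [sub_eq_add_neg]
  have := ultra' D 1 (-a) _ e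
  rwa [v_one, v_neg] at this

lemma vb_upper : min (D.v (Units.mk0 ((1 : F) - (a : F)) h)) (D.v a) ≤ 0 := by
  have e : ((Units.mk0 ((1 : F) - (a : F)) h : Fˣ) : F) + ((a : Fˣ) : F) = ((1 : Fˣ) : F) := by
    simp
  have := ultra' D _ a 1 e
  rwa [v_one] at this

lemma va_lower : min 0 (D.v (Units.mk0 ((1 : F) - (a : F)) h)) ≤ D.v a := by
  set b := Units.mk0 ((1 : F) - (a : F)) h with hb
  have e : ((1 : Fˣ) : F) + ((-b : Fˣ) : F) = ((a : Fˣ) : F) := by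
    have : (b : F) = 1 - (a : F) := rfl
    simp [this]
  have := ultra' D 1 (-b) a e
  rwa [v_one, v_neg] at this

/-- case v(a) ≥ 1 : v(1-a) = 0 and res(1-a) = 1 -/
lemma case_pos (hva : 1 ≤ D.v a) :
    D.v (Units.mk0 ((1 : F) - (a : F)) h) = 0 ∧
      cc D π hπ (Units.mk0 ((1 : F) - (a : F)) h) = 0 := by
  have h1 := vb_lower D a h
  have h2 := vb_upper D a h
  have hvb : D.v (Units.mk0 ((1 : F) - (a : F)) h) = 0 := by omega
  refine ⟨hvb, ?_⟩
  set b := Units.mk0 ((1 : F) - (a : F)) h with hbdef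
  have hma : (a : F) ∈ D.O := mem_O_of_v D a (by omega)
  have hmb : (b : F) ∈ D.O := mem_O_of_v D b (by omega)
  have hres : D.res ⟨(b : F), hmb⟩ = 1 := by
    have e : (⟨(b : F), hmb⟩ : D.O) = 1 - ⟨(a : F), hma⟩ := Subtype.ext rfl
    rw [e, map_sub, map_one, res_eq_zero_of_v D a hva hma, sub_zero]
  rw [cc, resU_of_v_zero D π hπ b hvb hmb, hres, if_pos IsSquare.one]

/-- case v(a) = 0, v(1-a) ≥ 1 : res(a) = 1 -/
lemma case_mid (hva : D.v a = 0)
    (hvb : 1 ≤ D.v (Units.mk0 ((1 : F) - (a : F)) h)) :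
    cc D π hπ a = 0 := by
  set b := Units.mk0 ((1 : F) - (a : F)) h with hbdef
  have hma : (a : F) ∈ D.O := mem_O_of_v D a (by omega)
  have hmb : (b : F) ∈ D.O := mem_O_of_v D b (by omega)
  have hres : D.res ⟨(a : F), hma⟩ = 1 := by
    have e : (⟨(a : F), hma⟩ : D.O) = 1 - ⟨(b : F), hmb⟩ := by
      refine Subtype.ext ?_
      show (a : F) = 1 - ((1 : F) - (a : F))
      ring
    rw [e, map_sub, map_one, res_eq_zero_of_v D b hvb hmb, sub_zero]
  rw [cc, resU_of_v_zero D π hπ a hva hma, hres, if_pos IsSquare.one]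

/-- case v(a) ≤ -1 : v(1-a) = v(a) and cc(1-a) = cc(a) + sK -/
lemma case_neg (hva : D.v a ≤ -1) :
    D.v (Units.mk0 ((1 : F) - (a : F)) h) = D.v a ∧
      cc D π hπ (Units.mk0 ((1 : F) - (a : F)) h) = cc D π hπ a + sK K := by
  set b := Units.mk0 ((1 : F) - (a : F)) h with hbdef
  have h1 := vb_lower D a h
  have h2 := va_lower D a h
  rw [← hbdef] at h1 h2
  have hvb : D.v b = D.v a := by omega
  refine ⟨hvb, ?_⟩
  -- b = a * (b * a⁻¹)
  have hba : D.v (b * a⁻¹) = 0 := by rw [D.v_mul, v_inv]; omega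
  have hmba : ((b * a⁻¹ : Fˣ) : F) ∈ D.O := mem_O_of_v D _ (by omega)
  have hmainv : ((a⁻¹ : Fˣ) : F) ∈ D.O := mem_O_of_v D _ (by rw [v_inv]; omega)
  have hresba : D.res ⟨((b * a⁻¹ : Fˣ) : F), hmba⟩ = -1 := by
    have e : (⟨((b * a⁻¹ : Fˣ) : F), hmba⟩ : D.O) = ⟨((a⁻¹ : Fˣ) : F), hmainv⟩ - 1 := by
      refine Subtype.ext ?_
      show ((b * a⁻¹ : Fˣ) : F) = ((a⁻¹ : Fˣ) : F) - 1
      rw [Units.val_mul, Units.val_inv_eq_inv_val]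
      show ((1 : F) - (a : F)) * ((a : F))⁻¹ = ((a : F))⁻¹ - 1
      field_simp
    rw [e, map_sub, map_one, res_eq_zero_of_v D a⁻¹ (by rw [v_inv]; omega) hmainv,
      zero_sub]
  have hcba : cc D π hπ (b * a⁻¹) = sK K := by
    rw [cc, resU_of_v_zero D π hπ _ hba hmba, hresba, sK]
    by_cases hsq : IsSquare ((-1 : K))
    · rw [if_pos hsq, if_pos hsq]
    · rw [if_neg hsq, if_neg hsq]
  have e2 : b = a * (b * a⁻¹) := by
    rw [mul_comm b a⁻¹, ← mul_assoc, mul_inv_cancel, one_mul]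
  rw [e2, cc_mul, hcba]

/-- the Steinberg relation kills the symbol -/
lemma steinberg_key :
    mfun D a * mfun D (Units.mk0 ((1 : F) - (a : F)) h) * sK K
      + mfun D a * cc D π hπ (Units.mk0 ((1 : F) - (a : F)) h)
      + mfun D (Units.mk0 ((1 : F) - (a : F)) h) * cc D π hπ a = 0 := by
  set b := Units.mk0 ((1 : F) - (a : F)) h with hbdef
  have h1 := vb_lower D a h
  have h2 := vb_upper D a h
  rw [← hbdef] at h1 h2
  rcases le_or_gt 1 (D.v a) with hva | hva
  · obtain ⟨hvb, hcb⟩ := case_pos D π hπ a h hva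
    rw [hcb, mfun, mfun, hvb]
    push_cast
    ring
  · rcases le_or_gt (D.v a) (-1) with hva' | hva'
    · obtain ⟨hvb, hcb⟩ := case_neg D π hπ a h hva'
      rw [hcb, mfun, mfun, hvb]
      have key : ∀ m c s : ZMod 2, m * m * s + m * (c + s) + m * c = 0 := by decide
      exact key _ _ _
    · have hva0 : D.v a = 0 := by omega
      have h1 := vb_lower D a h
      rcases le_or_gt 1 (D.v b) with hvb | hvb
      · have hca := case_mid D π hπ a h hva0 hvb
        rw [hca, mfun, hva0]
        push_cast
        ring
      · have hvb0 : D.v b = 0 := by omega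
        rw [mfun, mfun, hva0, hvb0]
        push_cast
        ring

end Steinberg

/-- the graded target ring element -/
def MatM (m c s : ZMod 2) : Matrix (Fin 4) (Fin 4) (ZMod 2) :=
  !![0,m,c,0; 0,0,0,m*s+c; 0,0,0,m; 0,0,0,0]

lemma MatM_add : ∀ m c n d s : ZMod 2, MatM (m+n) (c+d) s = MatM m c s + MatM n d s := by
  decide

lemma MatM_zero : ∀ s : ZMod 2, MatM 0 0 s = 0 := by decide

lemma MatM_mul : ∀ m c n d s : ZMod 2,
    MatM m c s * MatM n d s
      = !![0,0,0,m*n*s + m*d + n*c; 0,0,0,0; 0,0,0,0; 0,0,0,0] := by decide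

lemma single_eq_zero : ∀ x : ZMod 2,
    (!![0,0,0,x; 0,0,0,0; 0,0,0,0; 0,0,0,0] : Matrix (Fin 4) (Fin 4) (ZMod 2)) = 0 → x = 0 := by
  decide

/-- the symbol map on F^× as an additive hom into matrices -/
noncomputable def phi (D : PadicData F K) (π : Fˣ) (hπ : D.v π = 1) :
    Additive Fˣ →+ Matrix (Fin 4) (Fin 4) (ZMod 2) where
  toFun a := MatM (mfun D a.toMul) (cc D π hπ a.toMul) (sK K)
  map_zero' := by
    show MatM (mfun D 1) (cc D π hπ 1) (sK K) = 0
    have h1 : mfun D 1 = 0 := by rw [mfun, v_one]; rfl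
    rw [h1, cc_one, MatM_zero]
  map_add' x y := by
    show MatM (mfun D (x.toMul * y.toMul)) (cc D π hπ (x.toMul * y.toMul)) (sK K) = _
    rw [mfun_mul, cc_mul, MatM_add]

/-- the induced algebra hom on the tensor algebra -/
noncomputable def fT (D : PadicData F K) (π : Fˣ) (hπ : D.v π = 1) :
    TensorAlgebra ℤ (Additive Fˣ) →ₐ[ℤ] Matrix (Fin 4) (Fin 4) (ZMod 2) :=
  TensorAlgebra.lift ℤ (phi D π hπ).toIntLinearMap

lemma fT_ι (D : PadicData F K) (π : Fˣ) (hπ : D.v π = 1) (a : Fˣ) :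
    fT D π hπ (TensorAlgebra.ι ℤ (Additive.ofMul a))
      = MatM (mfun D a) (cc D π hπ a) (sK K) := by
  rw [fT, TensorAlgebra.lift_ι_apply]
  rfl

end Aux

namespace Aux

variable {F K : Type} [Field F] [Field K] [Fintype K]

lemma fT_rel (D : PadicData F K) (π : Fˣ) (hπ : D.v π = 1) :
    ∀ ⦃x y : TensorAlgebra ℤ (Additive Fˣ)⦄, MilnorRel F x y →
      (fT D π hπ).toRingHom x = (fT D π hπ).toRingHom y := by
  intro x y hr
  cases hr with
  | steinberg a h =>
      show fT D π hπ _ = fT D π hπ 0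
      rw [map_zero, map_mul, fT_ι, fT_ι, MatM_mul, steinberg_key D π hπ a h]
      decide
  | mod2 =>
      show fT D π hπ 2 = fT D π hπ 0
      rw [map_zero, map_ofNat]
      decide

end Aux

open Aux

/-- `{u}·{π} ≠ 0` in `k^M(F)` for a uniformizer `π` and a unit `u`
whose residue is a nonsquare. -/
theorem milnor_u_pi_ne_zero {F K : Type} [Field F] [CharZero F] [Field K] [Fintype K]
    (D : PadicData F K) (hodd : Odd (Fintype.card K))
    (π : Fˣ) (hπ : D.v π = 1)
    (u : Fˣ) (hu0 : D.v u = 0) (humem : (u : F) ∈ D.O)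
    (hu : ¬ ∃ b : K, b * b = D.res ⟨(u : F), humem⟩) :
    kcls u * kcls π ≠ 0 := by
  intro heq
  set g := RingQuot.lift ⟨(fT D π hπ).toRingHom, fT_rel D π hπ⟩ with hg
  have h0 : g (kcls u * kcls π) = 0 := by rw [heq, map_zero]
  rw [map_mul, kcls, kcls, hg, RingQuot.lift_mkRingHom_apply, RingQuot.lift_mkRingHom_apply]
    at h0
  have h0' : fT D π hπ (TensorAlgebra.ι ℤ (Additive.ofMul u)) *
      fT D π hπ (TensorAlgebra.ι ℤ (Additive.ofMul π)) = 0 := h0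
  rw [fT_ι, fT_ι, MatM_mul] at h0'
  have hB := single_eq_zero _ h0'
  -- compute the entry
  have hmu : mfun D u = 0 := by rw [mfun, hu0]; rfl
  have hmπ : mfun D π = 1 := by rw [mfun, hπ]; rfl
  have hcu : cc D π hπ u = 1 := by
    rw [cc, resU_of_v_zero D π hπ u hu0 humem, if_neg]
    intro hsq
    obtain ⟨r, hr⟩ := hsq
    exact hu ⟨r, hr.symm⟩
  rw [hmu, hmπ, hcu] at hB
  norm_num at hB
end

section
/- Let π be a uniformizer of F. Then {π}·{π} = 0 in k^M(F) if and only if q ≡ 1 (mod 4). -/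
open scoped Classical in
noncomputable def PadicData.w {F K : Type} [Field F] [Field K] (D : PadicData F K) (x : F) : WithTop ℤ :=
  if h : x = 0 then ⊤ else (D.v (Units.mk0 x h) : WithTop ℤ)

namespace PadicData

variable {F K : Type} [Field F] [Field K] (D : PadicData F K)

lemma w_zero : D.w 0 = ⊤ := dif_pos rfl

lemma w_eq_top {x : F} : D.w x = ⊤ ↔ x = 0 := by
  constructor
  · intro h; by_contra hx
    rw [w, dif_neg hx] at h; exact (WithTop.coe_ne_top h).elim
  · rintro rfl; exact D.w_zero

lemma w_unit (u : Fˣ) : D.w (u : F) = (D.v u : WithTop ℤ) := by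
  rw [w, dif_neg u.ne_zero, Units.mk0_val]

lemma w_ne_zero {x : F} (hx : x ≠ 0) (h : Units.mk0 x hx = Units.mk0 x hx) :
    D.w x = (D.v (Units.mk0 x hx) : WithTop ℤ) := dif_neg hx

lemma w_eq_coe {x : F} (hx : x ≠ 0) : D.w x = (D.v (Units.mk0 x hx) : WithTop ℤ) := dif_neg hx

lemma v_one : D.v 1 = 0 := by
  have := D.v_mul 1 1; rw [mul_one] at this; omega

lemma w_one : D.w (1 : F) = 0 := by
  rw [show (1:F) = ((1 : Fˣ) : F) by simp, D.w_unit, D.v_one]; rfl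

lemma v_inv (u : Fˣ) : D.v u⁻¹ = - D.v u := by
  have := D.v_mul u u⁻¹; rw [mul_inv_cancel] at this; rw [D.v_one] at this; omega

lemma v_neg_one : D.v (-1 : Fˣ) = 0 := by
  have := D.v_mul (-1) (-1); rw [neg_mul, one_mul, neg_neg] at this
  rw [D.v_one] at this; omega

lemma w_mul (x y : F) : D.w (x * y) = D.w x + D.w y := by
  by_cases hx : x = 0
  · simp [hx, w_zero]
  by_cases hy : y = 0
  · simp [hy, w_zero]
  have hxy : x * y ≠ 0 := mul_ne_zero hx hy
  rw [D.w_eq_coe hx, D.w_eq_coe hy, D.w_eq_coe hxy]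
  rw [show Units.mk0 (x*y) hxy = Units.mk0 x hx * Units.mk0 y hy from Units.ext rfl]
  rw [D.v_mul]; exact_mod_cast rfl

lemma w_neg (x : F) : D.w (-x) = D.w x := by
  rw [show -x = ((-1 : Fˣ) : F) * x by simp, w_mul, D.w_unit, D.v_neg_one]
  simp

lemma min_le_w_add (x y : F) : min (D.w x) (D.w y) ≤ D.w (x + y) := by
  by_cases hx : x = 0
  · simp [hx, w_zero]
  by_cases hy : y = 0
  · simp [hy, w_zero]
  by_cases hxy : x + y = 0
  · simp [hxy, w_zero, le_top]
  rw [D.w_eq_coe hx, D.w_eq_coe hy, D.w_eq_coe hxy]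
  have := D.v_ultra (Units.mk0 x hx) (Units.mk0 y hy) hxy
  exact_mod_cast this

lemma min_le_w_sub (x y : F) : min (D.w x) (D.w y) ≤ D.w (x - y) := by
  rw [sub_eq_add_neg]
  have := D.min_le_w_add x (-y); rwa [w_neg] at this

lemma w_add_eq_left {x y : F} (h : D.w x < D.w y) : D.w (x + y) = D.w x := by
  have h1 : D.w x ≤ D.w (x + y) := by
    have := D.min_le_w_add x y; rwa [min_eq_left h.le] at this
  rcases lt_or_eq_of_le h1 with h2 | h2
  · exfalso
    have : D.w x = D.w ((x + y) + (-y)) := by ring_nf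
    have h3 := D.min_le_w_add (x + y) (-y)
    rw [D.w_neg] at h3
    rw [show (x+y) + -y = x by ring] at h3
    have : min (D.w (x+y)) (D.w y) > D.w x := lt_min h2 h
    exact absurd h3 (not_le.mpr this)
  · exact h2.symm

lemma mem_O_iff {x : F} : x ∈ D.O ↔ 0 ≤ D.w x := by
  rw [D.mem_O]
  by_cases hx : x = 0
  · simp [hx, w_zero, le_top]
  · rw [D.w_eq_coe hx]
    constructor
    · intro h; exact_mod_cast h hx
    · intro h h'; exact_mod_cast h

lemma res_eq_zero_iff (x : D.O) : D.res x = 0 ↔ 1 ≤ D.w (x : F) := by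
  rw [D.res_eq_zero]
  by_cases hx : (x : F) = 0
  · simp [hx, w_zero, le_top]
  · rw [D.w_eq_coe hx]
    constructor
    · intro h; exact_mod_cast h hx
    · intro h h'; exact_mod_cast h

end PadicData


namespace MilnorAux

variable {F : Type} [Field F]

lemma two_eq_zero : (2 : MilnorK F) = 0 := by
  have h := RingQuot.mkRingHom_rel (MilnorRel.mod2 (F := F))
  rw [map_ofNat, map_zero] at h
  exact_mod_cast h

lemma add_self (x : MilnorK F) : x + x = 0 := by
  have : x + x = 2 * x := by rw [two_mul]
  rw [this, two_eq_zero, zero_mul]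

lemma neg_eq (x : MilnorK F) : -x = x :=
  neg_eq_of_add_eq_zero_left (add_self x)

lemma kcls_mul (a b : Fˣ) : kcls (F := F) (a * b) = kcls a + kcls b := by
  unfold kcls
  rw [show Additive.ofMul (a * b) = Additive.ofMul a + Additive.ofMul b from rfl]
  rw [map_add, map_add]

lemma kcls_one : kcls (F := F) 1 = 0 := by
  have := kcls_mul (F := F) 1 1
  rw [mul_one] at this
  have h2 := add_self (kcls (F := F) 1)
  nth_rewrite 1 [this]
  rw [h2]

lemma kcls_inv (a : Fˣ) : kcls (F := F) a⁻¹ = kcls a := by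
  have := kcls_mul a a⁻¹
  rw [mul_inv_cancel, kcls_one] at this
  have : kcls (F:=F) a⁻¹ = - kcls a := by
    exact eq_neg_of_add_eq_zero_right this.symm
  rw [this, neg_eq]

lemma steinberg (a : Fˣ) (h : (1 : F) - (a : F) ≠ 0) :
    kcls a * kcls (Units.mk0 ((1 : F) - (a : F)) h) = 0 := by
  have h2 := RingQuot.mkRingHom_rel (MilnorRel.steinberg a h)
  rw [map_mul, map_zero] at h2
  exact h2

lemma kcls_mul_neg (a : Fˣ) (ha : (a : F) ≠ 1) : kcls a * kcls (-a) = 0 := by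
  have h1 : (1 : F) - (a : F) ≠ 0 := fun h => ha (by linear_combination -h)
  have h1' : (1 : F) - ((a⁻¹ : Fˣ) : F) ≠ 0 := by
    intro h
    have hv : ((a⁻¹ : Fˣ) : F) = 1 := by linear_combination -h
    have : a⁻¹ = 1 := Units.ext (by rw [hv]; rfl)
    apply ha
    rw [inv_eq_one.mp this]; rfl
  set b := Units.mk0 ((1 : F) - (a : F)) h1 with hb
  set c := Units.mk0 ((1 : F) - ((a⁻¹ : Fˣ) : F)) h1' with hc
  have key : -a = b * c⁻¹ := by
    rw [eq_mul_inv_iff_mul_eq]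
    apply Units.ext
    push_cast [hb, hc, Units.val_mk0]
    have hane : (a : F) ≠ 0 := a.ne_zero
    field_simp
    ring
  have : kcls (F:=F) (-a) = kcls b + kcls c := by
    rw [key, kcls_mul, kcls_inv]
  rw [this, mul_add, steinberg a h1, zero_add]
  have : kcls (F:=F) a * kcls c = kcls (F:=F) a⁻¹ * kcls c := by rw [kcls_inv]
  rw [this, steinberg a⁻¹ h1']

end MilnorAux

section Hensel

variable {F K : Type} [Field F] [CharZero F] [Field K]

/-- Newton iteration for `x^2 + 1 = 0`. -/
noncomputable def hseq (x₀ : F) : ℕ → F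
  | 0 => x₀
  | n + 1 => (hseq x₀ n ^ 2 - 1) / (2 * hseq x₀ n)

namespace PadicData

variable (D : PadicData F K)

lemma w_two_eq_zero (h2 : D.res 2 ≠ 0) : D.w (2 : F) = 0 := by
  have hO : (2 : F) ∈ D.O := by exact_mod_cast SetLike.coe_mem (2 : D.O)
  have h0 : 0 ≤ D.w (2 : F) := (D.mem_O_iff).mp hO
  have h1 : ¬ (1 ≤ D.w (2 : F)) := by
    intro h
    exact h2 ((D.res_eq_zero_iff (2 : D.O)).mpr (by exact_mod_cast h))
  have hne : D.w (2:F) ≠ ⊤ := fun h => (by norm_num : (2:F) ≠ 0) (D.w_eq_top.mp h)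
  lift D.w (2 : F) to ℤ using hne with n hn
  norm_cast at h0 h1 ⊢
  omega


lemma w_ne_top_of_ne {x : F} (h : D.w x = 0) : x ≠ 0 := by
  intro hx; rw [hx, D.w_zero] at h; exact (by simp : (⊤ : WithTop ℤ) ≠ 0) h

lemma w_sq (x : F) : D.w (x ^ 2) = D.w x + D.w x := by
  rw [pow_two, D.w_mul]

lemma newton_step (h2 : D.w (2 : F) = 0) (x : F) (hx : D.w x = 0) (n : ℕ)
    (hv : ((n + 1 : ℤ) : WithTop ℤ) ≤ D.w (x ^ 2 + 1)) :
    D.w ((x ^ 2 - 1) / (2 * x)) = 0 ∧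
      ((n + 2 : ℤ) : WithTop ℤ) ≤ D.w (((x ^ 2 - 1) / (2 * x)) ^ 2 + 1) ∧
      ((n + 1 : ℤ) : WithTop ℤ) ≤ D.w ((x ^ 2 - 1) / (2 * x) - x) := by
  have hxne : x ≠ 0 := D.w_ne_top_of_ne hx
  have h2ne : (2 : F) ≠ 0 := by norm_num
  set y := (x ^ 2 - 1) / (2 * x) with hy
  set t := (x ^ 2 + 1) / (2 * x) with ht
  have hwt : D.w t = D.w (x ^ 2 + 1) := by
    have : t * (2 * x) = x ^ 2 + 1 := by rw [ht]; field_simp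
    have hw := D.w_mul t (2 * x)
    rw [this, D.w_mul, h2, hx] at hw
    simpa using hw.symm
  have hwt_pos : (0 : WithTop ℤ) < D.w t := by
    rw [hwt]
    refine lt_of_lt_of_le ?_ hv
    have h00 : ((0:ℤ) : WithTop ℤ) < ((n + 1 : ℤ) : WithTop ℤ) := WithTop.coe_lt_coe.mpr (by omega)
    simpa using h00
  have hyx : y - x = -t := by
    rw [hy, ht]; field_simp; ring
  have hwy : D.w y = 0 := by
    have : y = x + (-t) := by rw [← hyx]; ring
    rw [this, D.w_add_eq_left, hx]
    rw [D.w_neg, hx]; exact hwt_pos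
  refine ⟨hwy, ?_, ?_⟩
  · have key : (y ^ 2 + 1) * (2 * x) ^ 2 = (x ^ 2 + 1) ^ 2 := by
      rw [hy]; field_simp; ring
    have hw := congrArg D.w key
    rw [D.w_mul, D.w_sq, D.w_sq, D.w_mul, h2, hx] at hw
    have hw' : D.w (y ^ 2 + 1) = D.w (x ^ 2 + 1) + D.w (x ^ 2 + 1) := by
      simpa using hw
    rw [hw']
    calc ((n + 2 : ℤ) : WithTop ℤ) ≤ ((n+1 : ℤ) : WithTop ℤ) + ((n+1 : ℤ) : WithTop ℤ) := by
          rw [← WithTop.coe_add]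
          exact_mod_cast (by omega : (n + 2 : ℤ) ≤ (n+1) + (n+1))
    _ ≤ _ := add_le_add hv hv
  · rw [hyx, D.w_neg, hwt]; exact hv

lemma hseq_spec (h2 : D.w (2 : F) = 0) (x₀ : F) (h0 : D.w x₀ = 0)
    (h1 : ((1 : ℤ) : WithTop ℤ) ≤ D.w (x₀ ^ 2 + 1)) (n : ℕ) :
    D.w (hseq x₀ n) = 0 ∧ ((n + 1 : ℤ) : WithTop ℤ) ≤ D.w (hseq x₀ n ^ 2 + 1) := by
  induction n with
  | zero => exact ⟨h0, by exact_mod_cast h1⟩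
  | succ n ih =>
    obtain ⟨ha, hb, -⟩ := D.newton_step h2 (hseq x₀ n) ih.1 n ih.2
    refine ⟨ha, ?_⟩
    show ((n + 1 + 1 : ℤ) : WithTop ℤ) ≤ D.w (hseq x₀ (n+1) ^ 2 + 1)
    rw [show ((n : ℤ) + 1 + 1) = (n + 2 : ℤ) by ring]
    exact hb

lemma hseq_cauchy (h2 : D.w (2 : F) = 0) (x₀ : F) (h0 : D.w x₀ = 0)
    (h1 : ((1 : ℤ) : WithTop ℤ) ≤ D.w (x₀ ^ 2 + 1)) (n m : ℕ) (hnm : n ≤ m) :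
    ((n + 1 : ℤ) : WithTop ℤ) ≤ D.w (hseq x₀ m - hseq x₀ n) := by
  induction m, hnm using Nat.le_induction with
  | base => simp [D.w_zero, le_top]
  | succ m hm ih =>
    obtain ⟨ha, -, hc⟩ := D.newton_step h2 (hseq x₀ m) (D.hseq_spec h2 x₀ h0 h1 m).1 m
      (D.hseq_spec h2 x₀ h0 h1 m).2
    have step : ((n + 1 : ℤ) : WithTop ℤ) ≤ D.w (hseq x₀ (m+1) - hseq x₀ m) := by
      refine le_trans ?_ hc
      exact_mod_cast (by omega : (n + 1 : ℤ) ≤ m + 1)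
    have := D.min_le_w_add (hseq x₀ (m+1) - hseq x₀ m) (hseq x₀ m - hseq x₀ n)
    rw [show hseq x₀ (m+1) - hseq x₀ m + (hseq x₀ m - hseq x₀ n)
        = hseq x₀ (m+1) - hseq x₀ n by ring] at this
    exact le_trans (le_min step ih) this

/-- Hensel: lift a square root of `-1` from the residue field. -/
lemma exists_sqrt_neg_one (h2 : D.w (2 : F) = 0) (c : K) (hc : c * c = -1) :
    ∃ a : F, a * a = -1 := by
  -- lift c to O
  obtain ⟨x₀', hx₀'⟩ := D.res_surj c
  set x₀ : F := (x₀' : F) with hx0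
  have hcne : c ≠ 0 := by
    intro h; rw [h, mul_zero] at hc
    exact absurd hc.symm (by norm_num)
  have hwx₀ : D.w x₀ = 0 := by
    have hmem : 0 ≤ D.w x₀ := D.mem_O_iff.mp x₀'.2
    have hres : ¬ (1 ≤ D.w x₀) := by
      intro h
      exact hcne (by rw [← hx₀']; exact (D.res_eq_zero_iff x₀').mpr h)
    have hne : D.w x₀ ≠ ⊤ := by
      intro h
      exact hres (h ▸ le_top)
    lift D.w x₀ to ℤ using hne with k hk
    norm_cast at hmem hres ⊢
    omega
  have hwx₀sq : ((1 : ℤ) : WithTop ℤ) ≤ D.w (x₀ ^ 2 + 1) := by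
    have hmem : (x₀' ^ 2 + 1 : D.O) = ⟨x₀ ^ 2 + 1, by
        exact Subring.add_mem _ (Subring.pow_mem _ x₀'.2 2) (Subring.one_mem _)⟩ := by
      ext; push_cast; ring
    have : D.res (x₀' ^ 2 + 1) = 0 := by
      rw [map_add, map_pow, hx₀', map_one, pow_two, hc]; ring
    have := (D.res_eq_zero_iff _).mp this
    rw [hmem] at this
    exact_mod_cast this
  -- apply completeness
  have hcau : ∀ N : ℤ, ∃ M : ℕ, ∀ m, M ≤ m → ∀ n, M ≤ n → ∀ h : hseq x₀ m - hseq x₀ n ≠ 0,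
      N ≤ D.v (Units.mk0 (hseq x₀ m - hseq x₀ n) h) := by
    intro N
    refine ⟨N.toNat, fun m hm n hn h => ?_⟩
    have hb : ((min m n + 1 : ℤ) : WithTop ℤ) ≤ D.w (hseq x₀ m - hseq x₀ n) := by
      rcases le_total n m with hle | hle
      · simpa [min_eq_right hle] using D.hseq_cauchy h2 x₀ hwx₀ hwx₀sq n m hle
      · have := D.hseq_cauchy h2 x₀ hwx₀ hwx₀sq m n hle
        rw [← D.w_neg] at this
        simpa [min_eq_left hle, neg_sub] using this
    rw [D.w_eq_coe h] at hb
    have : (N : ℤ) ≤ min m n + 1 := by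
      have h1 : N ≤ N.toNat := Int.self_le_toNat N
      have : (N.toNat : ℤ) ≤ min m n := by exact_mod_cast Nat.le_min.mpr ⟨hm, hn⟩
      omega
    have hb' : (min (m:ℤ) n + 1) ≤ D.v (Units.mk0 _ h) := by exact_mod_cast hb
    have : (min (m:ℤ) (n:ℤ)) = ((min m n : ℕ) : ℤ) := by simp [Nat.cast_min]
    omega
  obtain ⟨a, ha⟩ := D.complete (hseq x₀) hcau
  -- show a * a = -1
  have hconv : ∀ N : ℤ, ∃ M : ℕ, ∀ n, M ≤ n → ((N : ℤ) : WithTop ℤ) ≤ D.w (hseq x₀ n - a) := by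
    intro N
    obtain ⟨M, hM⟩ := ha N
    refine ⟨M, fun n hn => ?_⟩
    by_cases h : hseq x₀ n - a = 0
    · rw [h, D.w_zero]; exact le_top
    · rw [D.w_eq_coe h]; exact_mod_cast hM n hn h
  have key : ∀ N : ℤ, ((N:ℤ) : WithTop ℤ) ≤ D.w (a * a + 1) := by
    intro N
    obtain ⟨M, hM⟩ := hconv (max N 1)
    set n := max M N.toNat with hn
    have hn1 : M ≤ n := le_max_left _ _
    have hwd : ((max N 1 : ℤ) : WithTop ℤ) ≤ D.w (hseq x₀ n - a) := hM n hn1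
    have hsn := D.hseq_spec h2 x₀ hwx₀ hwx₀sq n
    -- a + hseq n has w ≥ 0
    have hws : (0 : WithTop ℤ) ≤ D.w (a + hseq x₀ n) := by
      have : a + hseq x₀ n = (a - hseq x₀ n) + 2 * hseq x₀ n := by ring
      rw [this]
      refine le_trans ?_ (D.min_le_w_add _ _)
      refine le_min ?_ ?_
      · rw [← D.w_neg, neg_sub]
        exact le_trans (by exact_mod_cast (by omega : (0:ℤ) ≤ max N 1)) hwd
      · rw [D.w_mul, h2, hsn.1]; simp
    have hdecomp : a * a + 1 = (a - hseq x₀ n) * (a + hseq x₀ n) + (hseq x₀ n ^ 2 + 1) := by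
      ring
    rw [hdecomp]
    refine le_trans ?_ (D.min_le_w_add _ _)
    refine le_min ?_ ?_
    · rw [D.w_mul]
      have h1 : ((N : ℤ) : WithTop ℤ) ≤ D.w (a - hseq x₀ n) := by
        rw [← D.w_neg, neg_sub]
        exact le_trans (by exact_mod_cast le_max_left N 1) hwd
      calc ((N:ℤ) : WithTop ℤ) = ((N:ℤ) : WithTop ℤ) + 0 := by simp
      _ ≤ _ := add_le_add h1 hws
    · refine le_trans ?_ hsn.2
      have : (N : ℤ) ≤ (n : ℤ) + 1 := by
        have : (N.toNat : ℤ) ≤ n := by exact_mod_cast le_max_right M N.toNat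
        have := Int.self_le_toNat N
        omega
      exact_mod_cast this
  have : a * a + 1 = 0 := by
    by_contra h
    have hne : D.w (a * a + 1) ≠ ⊤ := fun ht => h (D.w_eq_top.mp ht)
    lift D.w (a * a + 1) to ℤ using hne with k hk
    have := key (k + 1)
    norm_cast at this
    omega
  exact ⟨a, by linear_combination this⟩

end PadicData

end Hensel

def Q4 : Type := ZMod 2 × ZMod 2 × ZMod 2 × ZMod 2

def Q4.mk (a b c z : ZMod 2) : Q4 := (a, b, c, z)

instance : AddCommGroup Q4 :=
  inferInstanceAs (AddCommGroup (ZMod 2 × ZMod 2 × ZMod 2 × ZMod 2))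
instance : DecidableEq Q4 :=
  inferInstanceAs (DecidableEq (ZMod 2 × ZMod 2 × ZMod 2 × ZMod 2))

instance : Mul Q4 :=
  ⟨fun a b =>
    (a.1 * b.1,
     a.1 * b.2.1 + a.2.1 * b.1,
     a.1 * b.2.2.1 + a.2.2.1 * b.1,
     a.1 * b.2.2.2 + a.2.2.2 * b.1 + a.2.1 * b.2.2.1 + a.2.2.1 * b.2.1 + a.2.1 * b.2.1)⟩

instance : One Q4 := ⟨Q4.mk 1 0 0 0⟩

namespace Q4

lemma mk_mul (a0 a1 a2 a3 b0 b1 b2 b3 : ZMod 2) :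
    Q4.mk a0 a1 a2 a3 * Q4.mk b0 b1 b2 b3
      = Q4.mk (a0 * b0) (a0 * b1 + a1 * b0) (a0 * b2 + a2 * b0)
         (a0 * b3 + a3 * b0 + a1 * b2 + a2 * b1 + a1 * b1) := rfl

lemma mk_add (a0 a1 a2 a3 b0 b1 b2 b3 : ZMod 2) :
    Q4.mk a0 a1 a2 a3 + Q4.mk b0 b1 b2 b3
      = Q4.mk (a0 + b0) (a1 + b1) (a2 + b2) (a3 + b3) := rfl

lemma zero_def : (0 : Q4) = Q4.mk 0 0 0 0 := rfl

lemma one_def : (1 : Q4) = Q4.mk 1 0 0 0 := rfl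

lemma eta (a : Q4) : a = Q4.mk a.1 a.2.1 a.2.2.1 a.2.2.2 := rfl

lemma mk_ext {a0 a1 a2 a3 b0 b1 b2 b3 : ZMod 2}
    (h0 : a0 = b0) (h1 : a1 = b1) (h2 : a2 = b2) (h3 : a3 = b3) :
    Q4.mk a0 a1 a2 a3 = Q4.mk b0 b1 b2 b3 := by
  subst h0 h1 h2 h3; rfl

lemma mk_inj {a0 a1 a2 a3 b0 b1 b2 b3 : ZMod 2}
    (h : Q4.mk a0 a1 a2 a3 = Q4.mk b0 b1 b2 b3) : a3 = b3 := by
  have := congrArg (fun x : Q4 => x.2.2.2) h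
  exact this

end Q4

lemma Q4.mul_assoc' (a b c : Q4) : a * b * c = a * (b * c) := by
  rw [Q4.eta a, Q4.eta b, Q4.eta c, Q4.mk_mul, Q4.mk_mul, Q4.mk_mul, Q4.mk_mul]
  exact Q4.mk_ext (by ring) (by ring) (by ring) (by ring)

lemma Q4.one_mul' (a : Q4) : 1 * a = a := by
  rw [Q4.eta a, Q4.one_def, Q4.mk_mul]
  exact Q4.mk_ext (by ring) (by ring) (by ring) (by ring)

lemma Q4.mul_one' (a : Q4) : a * 1 = a := by
  rw [Q4.eta a, Q4.one_def, Q4.mk_mul]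
  exact Q4.mk_ext (by ring) (by ring) (by ring) (by ring)

lemma Q4.left_distrib' (a b c : Q4) : a * (b + c) = a * b + a * c := by
  rw [Q4.eta a, Q4.eta b, Q4.eta c, Q4.mk_add, Q4.mk_mul, Q4.mk_mul, Q4.mk_mul, Q4.mk_add]
  exact Q4.mk_ext (by ring) (by ring) (by ring) (by ring)

lemma Q4.right_distrib' (a b c : Q4) : (a + b) * c = a * c + b * c := by
  rw [Q4.eta a, Q4.eta b, Q4.eta c, Q4.mk_add, Q4.mk_mul, Q4.mk_mul, Q4.mk_mul, Q4.mk_add]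
  exact Q4.mk_ext (by ring) (by ring) (by ring) (by ring)

lemma Q4.zero_mul' (a : Q4) : 0 * a = 0 := by
  rw [Q4.eta a, Q4.zero_def, Q4.mk_mul]
  exact Q4.mk_ext (by ring) (by ring) (by ring) (by ring)

lemma Q4.mul_zero' (a : Q4) : a * 0 = 0 := by
  rw [Q4.eta a, Q4.zero_def, Q4.mk_mul]
  exact Q4.mk_ext (by ring) (by ring) (by ring) (by ring)

instance : Ring Q4 :=
  { (inferInstance : AddCommGroup Q4), (inferInstance : Mul Q4),
    (inferInstance : One Q4) with
    mul_assoc := Q4.mul_assoc'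
    one_mul := Q4.one_mul'
    mul_one := Q4.mul_one'
    left_distrib := Q4.left_distrib'
    right_distrib := Q4.right_distrib'
    zero_mul := Q4.zero_mul'
    mul_zero := Q4.mul_zero' }

lemma Q4.two_eq_zero : (2 : Q4) = 0 := by
  have h : (2 : Q4) = 1 + 1 := one_add_one_eq_two.symm
  rw [h, Q4.one_def, Q4.mk_add, Q4.zero_def]
  exact Q4.mk_ext (by decide) rfl rfl rfl

lemma Q4.sq_gen (c : ZMod 2) :
    Q4.mk 0 1 c 0 * Q4.mk 0 1 c 0 = Q4.mk 0 0 0 1 := by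
  rw [Q4.mk_mul]
  refine Q4.mk_ext (by ring) (by ring) (by ring) ?_
  have : c + c = 0 := by revert c; decide
  linear_combination this

lemma Q4.gen_ne_zero : Q4.mk 0 0 0 1 ≠ 0 := by
  rw [Q4.zero_def]
  intro h
  exact one_ne_zero (Q4.mk_inj h)

lemma Q4.steinberg_prod (α β ca cb : ZMod 2) (h : α * cb + ca * β + α * β = 0) :
    Q4.mk 0 α ca 0 * Q4.mk 0 β cb 0 = 0 := by
  rw [Q4.zero_def, Q4.mk_mul]
  exact Q4.mk_ext (by ring) (by ring) (by ring) (by linear_combination h)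


section Residue

variable {F K : Type} [Field F] [CharZero F] [Field K] [Fintype K] [DecidableEq K]

namespace PadicData

variable (D : PadicData F K)

lemma v_pow (u : Fˣ) (n : ℕ) : D.v (u ^ n) = n * D.v u := by
  induction n with
  | zero => simpa using D.v_one
  | succ n ih => rw [pow_succ, D.v_mul, ih]; push_cast; ring

lemma v_zpow (u : Fˣ) (k : ℤ) : D.v (u ^ k) = k * D.v u := by
  rcases Int.eq_nat_or_neg k with ⟨n, rfl | rfl⟩
  · rw [zpow_natCast, D.v_pow]
  · rw [zpow_neg, zpow_natCast, D.v_inv, D.v_pow]; ring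

variable (π : Fˣ)

/-- The unit part of `x` w.r.t. the uniformizer `π`. -/
def uPart (x : Fˣ) : Fˣ := x * π ^ (-(D.v x))

lemma v_uPart (hπ : D.v π = 1) (x : Fˣ) : D.v (uPart D π x) = 0 := by
  rw [uPart, D.v_mul, D.v_zpow, hπ]; ring

lemma uPart_mem (hπ : D.v π = 1) (x : Fˣ) : ((uPart D π x : Fˣ) : F) ∈ D.O := by
  rw [D.mem_O_iff, D.w_unit, D.v_uPart π hπ]
  exact le_refl _

/-- Residue of the unit part. -/
noncomputable def ru (hπ : D.v π = 1) (x : Fˣ) : K :=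
  D.res ⟨((uPart D π x : Fˣ) : F), D.uPart_mem π hπ x⟩

lemma res_congr (x y : D.O) (h : ((1:ℤ) : WithTop ℤ) ≤ D.w ((x : F) - (y : F))) :
    D.res x = D.res y := by
  have h0 : D.res (x - y) = 0 := by
    apply (D.res_eq_zero_iff _).mpr
    have : ((x - y : D.O) : F) = (x : F) - (y : F) := rfl
    rw [this]
    exact_mod_cast h
  rw [map_sub] at h0
  exact sub_eq_zero.mp h0

lemma ru_ne_zero (hπ : D.v π = 1) (x : Fˣ) : D.ru π hπ x ≠ 0 := by
  intro h
  have := (D.res_eq_zero_iff _).mp h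
  rw [D.w_unit, D.v_uPart π hπ] at this
  exact absurd this (by exact_mod_cast (by norm_num : ¬ ((1:ℤ) ≤ 0)))

lemma ru_mul (hπ : D.v π = 1) (x y : Fˣ) :
    D.ru π hπ (x * y) = D.ru π hπ x * D.ru π hπ y := by
  have hu : uPart D π (x * y) = uPart D π x * uPart D π y := by
    rw [uPart, uPart, uPart, D.v_mul, neg_add, zpow_add]
    rw [mul_mul_mul_comm]
  unfold ru
  rw [← map_mul]
  congr 1
  apply Subtype.ext
  show ((uPart D π (x*y) : Fˣ) : F) = ((uPart D π x : Fˣ) : F) * ((uPart D π y : Fˣ) : F)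
  rw [hu]; rfl

lemma ru_congr_one (hπ : D.v π = 1) (x : Fˣ) (h0 : D.v x = 0)
    (h1 : ((1:ℤ) : WithTop ℤ) ≤ D.w ((x : F) - 1)) : D.ru π hπ x = 1 := by
  have hco : ((uPart D π x : Fˣ) : F) = (x : F) := by
    rw [uPart, h0, neg_zero, zpow_zero, mul_one]
  unfold ru
  have := D.res_congr ⟨((uPart D π x : Fˣ) : F), D.uPart_mem π hπ x⟩ 1 (by
    show ((1:ℤ) : WithTop ℤ) ≤ D.w (((uPart D π x : Fˣ) : F) - ((1 : D.O) : F))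
    rw [hco]
    exact h1)
  rw [this, map_one]

/-- Quadratic residue character of the unit part, valued in `ZMod 2`. -/
noncomputable def chi (hπ : D.v π = 1) (x : Fˣ) : ZMod 2 :=
  if quadraticChar K (D.ru π hπ x) = 1 then 0 else 1

lemma chi_mul (hπ : D.v π = 1) (x y : Fˣ) :
    D.chi π hπ (x * y) = D.chi π hπ x + D.chi π hπ y := by
  unfold chi
  rw [D.ru_mul π hπ, map_mul]
  rcases quadraticChar_dichotomy (D.ru_ne_zero π hπ x) with hx | hx <;>
    rcases quadraticChar_dichotomy (D.ru_ne_zero π hπ y) with hy | hy <;>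
      rw [hx, hy] <;> norm_num <;> first | rfl | decide

lemma chi_one (hπ : D.v π = 1) : D.chi π hπ 1 = 0 := by
  unfold chi
  rw [D.ru_congr_one π hπ 1 D.v_one (by simp [D.w_zero])]
  rw [MulChar.map_one]
  simp

lemma chi_eq_zero (hπ : D.v π = 1) (x : Fˣ) (h0 : D.v x = 0)
    (h1 : ((1:ℤ) : WithTop ℤ) ≤ D.w ((x : F) - 1)) : D.chi π hπ x = 0 := by
  unfold chi
  rw [D.ru_congr_one π hπ x h0 h1, MulChar.map_one]
  simp

/-- The key Steinberg compatibility for the tame-symbol-like character,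
when `q ≡ 3 (mod 4)`. -/
lemma chi_steinberg (hπ : D.v π = 1) (hq3 : quadraticChar K (-1 : K) = -1)
    (a : Fˣ) (h : (1 : F) - (a : F) ≠ 0) :
    ((D.v a : ℤ) : ZMod 2) * D.chi π hπ (Units.mk0 ((1:F) - (a:F)) h)
      + D.chi π hπ a * ((D.v (Units.mk0 ((1:F) - (a:F)) h) : ℤ) : ZMod 2)
      + ((D.v a : ℤ) : ZMod 2) * ((D.v (Units.mk0 ((1:F) - (a:F)) h) : ℤ) : ZMod 2) = 0 := by
  set b : Fˣ := Units.mk0 ((1:F) - (a:F)) h with hb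
  have hbF : (b : F) = 1 - (a : F) := rfl
  have hwb : D.w ((1:F) - (a:F)) = (D.v b : WithTop ℤ) := by
    rw [← hbF, D.w_unit]
  have hwa : D.w ((a : F)) = (D.v a : WithTop ℤ) := D.w_unit a
  rcases lt_trichotomy (D.v a) 0 with hneg | hzero | hpos
  · -- negative valuation: v b = v a, ru b = - ru a
    have hβ : D.v b = D.v a := by
      have : D.w ((1:F) - (a:F)) = D.w (-(a:F)) := by
        rw [show (1:F) - (a:F) = -(a:F) + 1 by ring]
        apply D.w_add_eq_left
        rw [D.w_neg, hwa, D.w_one]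
        exact_mod_cast hneg
      rw [hwb, D.w_neg, hwa] at this
      exact_mod_cast this
    -- ru b = - ru a
    have hrub : D.ru π hπ b = - D.ru π hπ a := by
      unfold ru
      rw [show -D.res ⟨((uPart D π a : Fˣ) : F), D.uPart_mem π hπ a⟩
          = D.res (-⟨((uPart D π a : Fˣ) : F), D.uPart_mem π hπ a⟩) by rw [map_neg]]
      apply D.res_congr
      show ((1:ℤ) : WithTop ℤ) ≤ D.w (((uPart D π b : Fˣ) : F) - (-((uPart D π a : Fˣ) : F)))
      have hval : ((uPart D π b : Fˣ) : F) - (-((uPart D π a : Fˣ) : F))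
          = ((π : F)) ^ (-(D.v a)) := by
        show ((b : F) * ((π ^ (-(D.v b)) : Fˣ) : F)) - (-((a:F) * ((π ^ (-(D.v a)) : Fˣ) : F))) = _
        rw [hβ, hbF]
        have : ((π ^ (-(D.v a)) : Fˣ) : F) = ((π : F)) ^ (-(D.v a)) := by
          rw [Units.val_zpow_eq_zpow_val]
        rw [this]
        ring
      rw [hval]
      have : D.w (((π:F)) ^ (-(D.v a))) = ((-(D.v a) : ℤ) : WithTop ℤ) := by
        rw [show ((π:F)) ^ (-(D.v a)) = ((π ^ (-(D.v a)) : Fˣ) : F) by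
          rw [Units.val_zpow_eq_zpow_val], D.w_unit, D.v_zpow, hπ, mul_one]
      rw [this]
      exact_mod_cast (by omega : (1:ℤ) ≤ -(D.v a))
    -- chi a + chi b = 1
    have hsum : D.chi π hπ a + D.chi π hπ b = 1 := by
      unfold chi
      rw [hrub, show -D.ru π hπ a = (-1) * D.ru π hπ a by ring, map_mul, hq3]
      rcases quadraticChar_dichotomy (D.ru_ne_zero π hπ a) with hx | hx <;>
        rw [hx] <;> norm_num
    rw [hβ]
    have hsq : ((D.v a : ℤ) : ZMod 2) * ((D.v a : ℤ) : ZMod 2) = ((D.v a : ℤ) : ZMod 2) := by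
      have : ∀ z : ZMod 2, z * z = z := by decide
      exact this _
    have htwo : ((D.v a : ℤ) : ZMod 2) * 2 = 0 := by
      have h2 : ∀ z : ZMod 2, z * 2 = 0 := by decide
      exact h2 _
    linear_combination ((D.v a : ℤ) : ZMod 2) * hsum + hsq + htwo
  · -- v a = 0
    have hβ0 : 0 ≤ D.v b := by
      have := D.min_le_w_sub (1:F) (a:F)
      rw [D.w_one, hwa, hzero, hwb] at this
      simpa using this
    rcases eq_or_lt_of_le hβ0 with hβ | hβ
    · -- both units
      rw [hzero, ← hβ]
      push_cast
      ring
    · -- v b ≥ 1 : chi a = 0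
      have hchia : D.chi π hπ a = 0 := by
        apply D.chi_eq_zero π hπ a hzero
        have : (a : F) - 1 = -((1:F) - (a:F)) := by ring
        rw [this, D.w_neg, hwb]
        exact_mod_cast hβ
      rw [hzero, hchia]
      push_cast
      ring
  · -- v a ≥ 1 : v b = 0 and chi b = 0
    have hβ : D.v b = 0 := by
      have : D.w ((1:F) - (a:F)) = D.w (1:F) := by
        rw [show (1:F) - (a:F) = (1:F) + (-(a:F)) by ring]
        apply D.w_add_eq_left
        rw [D.w_neg, hwa, D.w_one]
        exact_mod_cast hpos
      rw [hwb, D.w_one] at this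
      exact_mod_cast this
    have hchib : D.chi π hπ b = 0 := by
      apply D.chi_eq_zero π hπ b hβ
      have : (b : F) - 1 = -(a : F) := by rw [hbF]; ring
      rw [this, D.w_neg, hwa]
      exact_mod_cast hpos
    rw [hβ, hchib]
    push_cast
    ring

end PadicData

end Residue

section Final

variable {F K : Type} [Field F] [CharZero F] [Field K] [Fintype K] [DecidableEq K]

namespace PadicData

variable (D : PadicData F K) (π : Fˣ)

/-- The additive map `F^× → Q4` encoding valuation and unit-part character. -/
lemma LQ4_zero_aux (hπ : D.v π = 1) :
    Q4.mk 0 ((D.v 1 : ℤ) : ZMod 2) (D.chi π hπ 1) 0 = 0 := by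
  rw [D.v_one, D.chi_one π hπ, Q4.zero_def]
  exact Q4.mk_ext (by norm_num) rfl rfl rfl

lemma LQ4_add_aux (hπ : D.v π = 1) (x y : Fˣ) :
    Q4.mk 0 ((D.v (x * y) : ℤ) : ZMod 2) (D.chi π hπ (x * y)) 0
      = Q4.mk 0 ((D.v x : ℤ) : ZMod 2) (D.chi π hπ x) 0
        + Q4.mk 0 ((D.v y : ℤ) : ZMod 2) (D.chi π hπ y) 0 := by
  rw [D.v_mul, D.chi_mul π hπ, Q4.mk_add]
  push_cast
  exact Q4.mk_ext (by ring) (by ring) (by ring) (by ring)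

noncomputable def LQ4 (hπ : D.v π = 1) : Additive Fˣ →+ Q4 where
  toFun a := Q4.mk 0 ((D.v a.toMul : ℤ) : ZMod 2) (D.chi π hπ a.toMul) 0
  map_zero' := D.LQ4_zero_aux π hπ
  map_add' x y := D.LQ4_add_aux π hπ x.toMul y.toMul

noncomputable def PhiT (hπ : D.v π = 1) :
    TensorAlgebra ℤ (Additive Fˣ) →ₐ[ℤ] Q4 :=
  TensorAlgebra.lift ℤ (D.LQ4 π hπ).toIntLinearMap

lemma PhiT_ι (hπ : D.v π = 1) (a : Fˣ) :
    D.PhiT π hπ (TensorAlgebra.ι ℤ (Additive.ofMul a))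
      = Q4.mk 0 ((D.v a : ℤ) : ZMod 2) (D.chi π hπ a) 0 := by
  rw [PhiT, TensorAlgebra.lift_ι_apply]
  rfl

lemma PhiT_rel (hπ : D.v π = 1) (hq3 : quadraticChar K (-1 : K) = -1) :
    ∀ ⦃x y : TensorAlgebra ℤ (Additive Fˣ)⦄, MilnorRel F x y →
      (D.PhiT π hπ).toRingHom x = (D.PhiT π hπ).toRingHom y := by
  intro x y hrel
  induction hrel with
  | steinberg a h =>
    show D.PhiT π hπ _ = D.PhiT π hπ 0
    rw [map_mul, map_zero, D.PhiT_ι π hπ, D.PhiT_ι π hπ]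
    exact Q4.steinberg_prod _ _ _ _ (D.chi_steinberg π hπ hq3 a h)
  | mod2 =>
    show D.PhiT π hπ 2 = D.PhiT π hπ 0
    rw [map_zero, map_ofNat]
    exact Q4.two_eq_zero

noncomputable def PhiM (hπ : D.v π = 1) (hq3 : quadraticChar K (-1 : K) = -1) :
    MilnorK F →+* Q4 :=
  RingQuot.lift ⟨(D.PhiT π hπ).toRingHom, D.PhiT_rel π hπ hq3⟩

lemma PhiM_kcls (hπ : D.v π = 1) (hq3 : quadraticChar K (-1 : K) = -1) (a : Fˣ) :
    D.PhiM π hπ hq3 (kcls a) = Q4.mk 0 ((D.v a : ℤ) : ZMod 2) (D.chi π hπ a) 0 := by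
  rw [PhiM, kcls, RingQuot.lift_mkRingHom_apply]
  exact D.PhiT_ι π hπ a

end PadicData

end Final


/-- `{π}·{π} = 0` in `k^M(F)` iff `q ≡ 1 (mod 4)`. -/
theorem milnor_pi_sq_eq_zero_iff {F K : Type} [Field F] [CharZero F] [Field K] [Fintype K]
    (D : PadicData F K) (hodd : Odd (Fintype.card K))
    (π : Fˣ) (hπ : D.v π = 1) :
    kcls π * kcls π = 0 ↔ Fintype.card K % 4 = 1 := by
  letI : DecidableEq K := Classical.decEq K
  have hchar2 : ringChar K ≠ 2 := by
    intro h
    have := FiniteField.even_card_iff_char_two.mp h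
    rcases hodd with ⟨m, hm⟩
    omega
  constructor
  · -- {π}² = 0 → q ≡ 1 (mod 4)
    intro hsq
    by_contra hq
    have hq3 : Fintype.card K % 4 = 3 := by
      rcases hodd with ⟨m, hm⟩
      rcases FiniteField.even_card_iff_char_two (F := K) with ⟨h1, h2⟩
      omega
    have hqc : quadraticChar K (-1 : K) = -1 := by
      rw [quadraticChar_neg_one_iff_not_isSquare, FiniteField.isSquare_neg_one_iff]
      omega
    have h1 := congrArg (D.PhiM π hπ hqc) hsq
    rw [map_mul, map_zero, D.PhiM_kcls, hπ] at h1
    rw [show (((1:ℤ)) : ZMod 2) = 1 by norm_num] at h1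
    rw [Q4.sq_gen] at h1
    exact Q4.gen_ne_zero h1
  · -- q ≡ 1 (mod 4) → {π}² = 0
    intro hq1
    have hsqK : IsSquare (-1 : K) := FiniteField.isSquare_neg_one_iff.mpr (by omega)
    obtain ⟨c, hc⟩ := hsqK
    have h2res : D.res 2 ≠ 0 := by
      have h2 : D.res 2 = (2 : K) := map_ofNat _ 2
      rw [h2]
      exact Ring.two_ne_zero hchar2
    obtain ⟨u, hu⟩ := D.exists_sqrt_neg_one (D.w_two_eq_zero h2res) c hc.symm
    have hune : u ≠ 0 := by
      intro h; rw [h, mul_zero] at hu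
      exact (by norm_num : (0:F) ≠ -1) hu
    set U : Fˣ := Units.mk0 u hune with hUdef
    have hU : U * U = -1 := by
      apply Units.ext
      push_cast [hUdef]
      exact hu
    have hπ1 : (π : F) ≠ 1 := by
      intro hh
      have h1 : π = 1 := Units.ext hh
      rw [h1, D.v_one] at hπ
      exact absurd hπ (by norm_num)
    have hm1 : kcls (F := F) (-1 : Fˣ) = 0 := by
      rw [← hU, MilnorAux.kcls_mul]
      exact MilnorAux.add_self _
    have hsplit : kcls (F := F) π = kcls ((-1 : Fˣ) * (-π)) := by
      rw [neg_mul_neg, one_mul]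
    nth_rewrite 2 [hsplit]
    rw [MilnorAux.kcls_mul, hm1, zero_add]
    exact MilnorAux.kcls_mul_neg π hπ1
end

section
/- Let u ∈ 𝒪^× be a unit whose residue res(u) is not a square in 𝔽. Then {u}·{u} = 0 in k^M(F). -/
namespace PadicAux

variable {F K : Type} [Field F] [Field K]

def Big (D : PadicData F K) (N : ℤ) (x : F) : Prop :=
  ∀ h : x ≠ 0, N ≤ D.v (Units.mk0 x h)

variable (D : PadicData F K)

theorem v_one : D.v 1 = 0 := by
  have := D.v_mul 1 1; simp at this; omega

theorem v_neg_one : D.v (-1) = 0 := by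
  have h := D.v_mul (-1) (-1)
  have h2 : ((-1 : Fˣ) * (-1 : Fˣ)) = 1 := by ext; simp
  rw [h2, v_one] at h; omega

theorem v_inv (x : Fˣ) : D.v x⁻¹ = - D.v x := by
  have := D.v_mul x x⁻¹; rw [mul_inv_cancel, v_one] at this; omega

theorem v_mk0_mul (x y : F) (hx : x ≠ 0) (hy : y ≠ 0) :
    D.v (Units.mk0 (x * y) (mul_ne_zero hx hy)) =
      D.v (Units.mk0 x hx) + D.v (Units.mk0 y hy) := by
  rw [← D.v_mul]; congr 1; ext; simp

theorem big_zero (N : ℤ) : Big D N (0 : F) := fun h => absurd rfl h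

theorem big_mono {M N : ℤ} {x : F} (h : M ≤ N) (hx : Big D N x) : Big D M x :=
  fun h' => le_trans h (hx h')

theorem big_neg {N : ℤ} {x : F} (hx : Big D N x) : Big D N (-x) := by
  intro h
  have hx0 : x ≠ 0 := fun e => h (by simp [e])
  have hu : Units.mk0 (-x) h = (-1) * Units.mk0 x hx0 := by ext; simp
  rw [hu, D.v_mul, v_neg_one]
  simpa using hx hx0

theorem big_add {N : ℤ} {x y : F} (hx : Big D N x) (hy : Big D N y) :
    Big D N (x + y) := by
  intro h
  by_cases hx0 : x = 0
  · subst hx0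
    have := hy (by simpa using h)
    simpa using this
  by_cases hy0 : y = 0
  · subst hy0
    have := hx (by simpa using h)
    simpa using this
  · have hult := D.v_ultra (Units.mk0 x hx0) (Units.mk0 y hy0) (by simpa using h)
    simp only [Units.val_mk0] at hult
    refine le_trans ?_ hult
    exact le_min (hx hx0) (hy hy0)

theorem big_sub {N : ℤ} {x y : F} (hx : Big D N x) (hy : Big D N y) :
    Big D N (x - y) := by
  rw [sub_eq_add_neg]; exact big_add D hx (big_neg D hy)

theorem big_mul {M N : ℤ} {x y : F} (hx : Big D M x) (hy : Big D N y) :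
    Big D (M + N) (x * y) := by
  intro h
  have hx0 : x ≠ 0 := fun e => h (by simp [e])
  have hy0 : y ≠ 0 := fun e => h (by simp [e])
  rw [v_mk0_mul D x y hx0 hy0]
  exact add_le_add (hx hx0) (hy hy0)

theorem eq_zero_of_forall_big {x : F} (hx : ∀ N : ℤ, Big D N x) : x = 0 := by
  by_contra h
  have := hx (D.v (Units.mk0 x h) + 1) h
  omega

theorem mem_O_iff_big (x : F) : x ∈ D.O ↔ Big D 0 x := D.mem_O x

theorem res_zero_iff_big {x : F} (hx : x ∈ D.O) :
    D.res ⟨x, hx⟩ = 0 ↔ Big D 1 x := D.res_eq_zero ⟨x, hx⟩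

theorem v_eq_zero_of_res_ne {x : F} (hx : x ∈ D.O) (h : D.res ⟨x, hx⟩ ≠ 0) :
    ∃ h0 : x ≠ 0, D.v (Units.mk0 x h0) = 0 := by
  have hx0 : x ≠ 0 := by
    rintro rfl
    exact h (by rw [show (⟨(0:F), hx⟩ : D.O) = 0 from rfl, map_zero])
  refine ⟨hx0, ?_⟩
  have h0 : 0 ≤ D.v (Units.mk0 x hx0) := (D.mem_O x).mp hx hx0
  have h1 : ¬ (1 ≤ D.v (Units.mk0 x hx0)) := fun hb => h ((res_zero_iff_big D hx).mpr (fun _ => hb))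
  omega

theorem v_mk0_eq {x y : F} (hx : x ≠ 0) (hy : y ≠ 0) (e : x = y) :
    D.v (Units.mk0 x hx) = D.v (Units.mk0 y hy) := by subst e; rfl

theorem v_of_neg {x : F} (hx : x ≠ 0) :
    D.v (Units.mk0 (-x) (neg_ne_zero.mpr hx)) = D.v (Units.mk0 x hx) := by
  have hu : Units.mk0 (-x) (neg_ne_zero.mpr hx) = (-1) * Units.mk0 x hx := by ext; simp
  rw [hu, D.v_mul, v_neg_one]; omega

/-- If `v x = 0` and `v d ≥ 1` (or `d = 0`), then `x + d ≠ 0` with valuation `0`. -/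
theorem v_add_small {x d : F} (hx : x ≠ 0) (hv : D.v (Units.mk0 x hx) = 0)
    (hd : Big D 1 d) : ∃ h : x + d ≠ 0, D.v (Units.mk0 (x + d) h) = 0 := by
  have hne : x + d ≠ 0 := by
    intro h
    have hdx : d = -x := by linear_combination h
    subst hdx
    have h1 := hd (neg_ne_zero.mpr hx)
    rw [v_of_neg D hx] at h1
    omega
  refine ⟨hne, ?_⟩
  by_cases hd0 : d = 0
  · subst hd0
    rw [v_mk0_eq D (x := x + 0) (y := x) hne hx (by ring)]
    exact hv
  · have hvd : 1 ≤ D.v (Units.mk0 d hd0) := hd hd0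
    have hlow := D.v_ultra (Units.mk0 x hx) (Units.mk0 d hd0) (by simpa using hne)
    simp only [Units.val_mk0] at hlow
    have hupp := D.v_ultra (Units.mk0 (x + d) hne) (Units.mk0 (-d) (neg_ne_zero.mpr hd0))
      (by simp only [Units.val_mk0]; intro h; exact hx (by linear_combination h))
    simp only [Units.val_mk0] at hupp
    rw [v_mk0_eq D (x := x + d + -d) (y := x) (by intro h; exact hx (by linear_combination h)) hx (by ring)] at hupp
    rw [v_of_neg D hd0] at hupp
    omega


open Classical in
noncomputable def newton (c x0 : F) : ℕ → F
  | 0 => x0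
  | n+1 =>
      if (newton c x0 n) * (newton c x0 n) = c then newton c x0 n
      else (newton c x0 n + c / newton c x0 n) / 2

theorem hensel (h2 : (2:F) ≠ 0) (hv2 : D.v (Units.mk0 (2:F) h2) = 0)
    {c : F} (hc : c ∈ D.O) {t : K} (ht : t ≠ 0) (htc : D.res ⟨c, hc⟩ = t * t) :
    ∃ x : F, x * x = c := by
  obtain ⟨x0', hx0'⟩ := D.res_surj t
  set x0 := (x0' : F) with hx0def
  have hx0O : x0 ∈ D.O := x0'.2
  have big2 : Big D 0 (2:F) := fun h => le_of_eq hv2.symm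
  -- main invariant
  have key : ∀ n : ℕ, ∃ h : newton c x0 n ≠ 0,
      D.v (Units.mk0 (newton c x0 n) h) = 0 ∧
      Big D ((n:ℤ)+1) (newton c x0 n * newton c x0 n - c) := by
    intro n
    induction n with
    | zero =>
      have hres : D.res ⟨x0, hx0O⟩ ≠ 0 := by
        rw [show (⟨x0, hx0O⟩ : D.O) = x0' from rfl, hx0']
        exact ht
      obtain ⟨h0, hv0⟩ := v_eq_zero_of_res_ne D hx0O hres
      refine ⟨h0, hv0, ?_⟩
      have hmem : x0 * x0 - c ∈ D.O := sub_mem (mul_mem hx0O hx0O) hc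
      have hres0 : D.res ⟨x0 * x0 - c, hmem⟩ = 0 := by
        have he : (⟨x0 * x0 - c, hmem⟩ : D.O) = x0' * x0' - ⟨c, hc⟩ := rfl
        rw [he, map_sub, map_mul, hx0', htc]
        ring
      have := (res_zero_iff_big D hmem).mp hres0
      exact big_mono D (by norm_num) this
    | succ n ih =>
      obtain ⟨hn0, hvn, hbig⟩ := ih
      by_cases hfix : newton c x0 n * newton c x0 n = c
      · have hstep : newton c x0 (n+1) = newton c x0 n := by
          simp only [newton]; rw [if_pos hfix]
        rw [hstep]
        refine ⟨hn0, hvn, ?_⟩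
        have h0 : newton c x0 n * newton c x0 n - c = 0 := sub_eq_zero_of_eq hfix
        rw [h0]
        exact big_zero D _
      · have hstep : newton c x0 (n+1) = (newton c x0 n + c / newton c x0 n) / 2 := by
          simp only [newton]; rw [if_neg hfix]
        set x := newton c x0 n with hxdef
        have he0 : x * x - c ≠ 0 := sub_ne_zero_of_ne hfix
        have h2x : (2:F) * x ≠ 0 := mul_ne_zero h2 hn0
        have hbd0 : Big D 0 ((2*x)⁻¹) := by
          intro h
          have hv2x : D.v (Units.mk0 ((2:F)*x) h2x) = 0 := by
            rw [v_mk0_mul D 2 x h2 hn0, hv2, hvn]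
            omega
          have hu : Units.mk0 ((2*x)⁻¹) h = (Units.mk0 ((2:F)*x) h2x)⁻¹ := by ext; simp
          rw [hu, v_inv, hv2x]
          omega
        have hyd : newton c x0 (n+1) = x + (x * x - c) * (-((2*x)⁻¹)) := by
          rw [hstep]; field_simp; ring
        have hbig1 : Big D ((n:ℤ)+1) ((x * x - c) * (-((2*x)⁻¹))) := by
          have := big_mul D hbig (big_neg D hbd0)
          simpa using this
        have hb1 : Big D 1 ((x * x - c) * (-((2*x)⁻¹))) :=
          big_mono D (show (1:ℤ) ≤ (n:ℤ)+1 by omega) hbig1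
        obtain ⟨hy0, hvy⟩ := v_add_small D hn0 hvn hb1
        have hy0' : newton c x0 (n+1) ≠ 0 := by rw [hyd]; exact hy0
        have hbignext : Big D (((n+1:ℕ):ℤ)+1) (newton c x0 (n+1) * newton c x0 (n+1) - c) := by
          have hid : newton c x0 (n+1) * newton c x0 (n+1) - c
              = ((x*x - c)*(x*x - c)) * ((2*x)⁻¹ * (2*x)⁻¹) := by
            rw [hstep]; field_simp; ring
          rw [hid]
          have h' : Big D ((n:ℤ)+1+((n:ℤ)+1))
              (((x*x - c)*(x*x - c)) * ((2*x)⁻¹ * (2*x)⁻¹)) := by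
            simpa using big_mul D (big_mul D hbig hbig) (big_mul D hbd0 hbd0)
          exact big_mono D (by push_cast; omega) h'
        exact ⟨hy0', by rw [v_mk0_eq D hy0' hy0 hyd]; exact hvy, hbignext⟩
  -- consecutive differences are small
  have diff : ∀ n : ℕ, Big D ((n:ℤ)+1) (newton c x0 (n+1) - newton c x0 n) := by
    intro n
    obtain ⟨hn0, hvn, hbig⟩ := key n
    by_cases hfix : newton c x0 n * newton c x0 n = c
    · have hstep : newton c x0 (n+1) = newton c x0 n := by
        simp only [newton]; rw [if_pos hfix]
      rw [hstep, sub_self]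
      exact big_zero D _
    · have hstep : newton c x0 (n+1) = (newton c x0 n + c / newton c x0 n) / 2 := by
        simp only [newton]; rw [if_neg hfix]
      set x := newton c x0 n with hxdef
      have h2x : (2:F) * x ≠ 0 := mul_ne_zero h2 hn0
      have hbd0 : Big D 0 ((2*x)⁻¹) := by
        intro h
        have hv2x : D.v (Units.mk0 ((2:F)*x) h2x) = 0 := by
          rw [v_mk0_mul D 2 x h2 hn0, hv2, hvn]
          omega
        have hu : Units.mk0 ((2*x)⁻¹) h = (Units.mk0 ((2:F)*x) h2x)⁻¹ := by ext; simp
        rw [hu, v_inv, hv2x]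
        omega
      have hid : newton c x0 (n+1) - x = (x * x - c) * (-((2*x)⁻¹)) := by
        rw [hstep]; field_simp; ring
      rw [hid]
      simpa using big_mul D hbig (big_neg D hbd0)
  have chain : ∀ n m : ℕ, n ≤ m → Big D ((n:ℤ)+1) (newton c x0 m - newton c x0 n) := by
    intro n m hnm
    induction m, hnm using Nat.le_induction with
    | base => rw [sub_self]; exact big_zero D _
    | succ m hm ih =>
      have h1 : newton c x0 (m+1) - newton c x0 n
          = (newton c x0 (m+1) - newton c x0 m) + (newton c x0 m - newton c x0 n) := by ring
      rw [h1]
      exact big_add D (big_mono D (show (n:ℤ)+1 ≤ (m:ℤ)+1 by omega) (diff m)) ih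
  have cauchy := D.complete (fun n => newton c x0 n) ?_
  swap
  · intro N
    refine ⟨N.toNat, ?_⟩
    intro m hm n hn
    show Big D N (newton c x0 m - newton c x0 n)
    rcases le_total n m with h | h
    · exact big_mono D (show N ≤ (n:ℤ)+1 by omega) (chain n m h)
    · have he : newton c x0 m - newton c x0 n = -(newton c x0 n - newton c x0 m) := by ring
      rw [he]
      exact big_neg D (big_mono D (show N ≤ (m:ℤ)+1 by omega) (chain m n h))
  obtain ⟨a, ha⟩ := cauchy
  refine ⟨a, ?_⟩
  have final : ∀ N : ℤ, Big D N (a * a - c) := by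
    intro N
    obtain ⟨M, hM⟩ := ha (max N 1)
    set n := max M (max N 1).toNat with hndef
    have h1 : Big D (max N 1) (newton c x0 n - a) := fun h => hM n (le_max_left _ _) h
    have h1' : Big D (max N 1) (a - newton c x0 n) := by
      have he : a - newton c x0 n = -(newton c x0 n - a) := by ring
      rw [he]
      exact big_neg D h1
    obtain ⟨hn0, hvn, hbign⟩ := key n
    have h2' : Big D (max N 1) (newton c x0 n * newton c x0 n - c) := by
      refine big_mono D ?_ hbign
      have : (max N 1).toNat ≤ n := le_trans (le_max_right _ _) (le_refl n)
      omega
    have hsum : Big D 0 (a + newton c x0 n) := by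
      have e1 : a + newton c x0 n
          = (a - newton c x0 n) + ((2:F) * newton c x0 n) := by ring
      rw [e1]
      refine big_add D (big_mono D (show (0:ℤ) ≤ max N 1 by omega) h1') ?_
      simpa using big_mul D big2 (show Big D 0 (newton c x0 n) from fun h => le_of_eq hvn.symm)
    have hmain : a * a - c
        = (a - newton c x0 n) * (a + newton c x0 n)
          + (newton c x0 n * newton c x0 n - c) := by ring
    rw [hmain]
    refine big_mono D (le_max_left N 1) (big_add D ?_ h2')
    simpa using big_mul D h1' hsum
  have h0 := eq_zero_of_forall_big D final
  linear_combination h0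


end PadicAux

open PadicAux

section Milnor

variable {F : Type} [Field F]

theorem kcls_mul (a b : Fˣ) : kcls (a * b) = kcls a + kcls b := by
  unfold kcls
  rw [show Additive.ofMul (a * b) = Additive.ofMul a + Additive.ofMul b from rfl,
    map_add, map_add]

theorem milnor_two : (2 : MilnorK F) = 0 := by
  have h := RingQuot.mkRingHom_rel (MilnorRel.mod2 (F := F))
  rw [map_zero, map_ofNat] at h
  exact h

theorem milnor_add_self (z : MilnorK F) : z + z = 0 := by
  rw [← two_mul, milnor_two, zero_mul]

theorem kcls_one : kcls (1 : Fˣ) = 0 := by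
  unfold kcls
  rw [show Additive.ofMul (1 : Fˣ) = 0 from rfl, map_zero, map_zero]

theorem kcls_inv (a : Fˣ) : kcls a⁻¹ = kcls a := by
  have h1 : kcls a + kcls a⁻¹ = 0 := by
    rw [← kcls_mul, mul_inv_cancel, kcls_one]
  have h2 : kcls a + kcls a = 0 := milnor_add_self _
  have := eq_neg_of_add_eq_zero_right h1
  rw [this, neg_eq_of_add_eq_zero_left h2]

theorem kcls_steinberg (a : Fˣ) (h : (1 : F) - (a : F) ≠ 0) :
    kcls a * kcls (Units.mk0 ((1 : F) - (a : F)) h) = 0 := by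
  unfold kcls
  rw [← map_mul]
  exact (RingQuot.mkRingHom_rel (MilnorRel.steinberg a h)).trans (map_zero _)

end Milnor

/-- `{u}·{u} = 0` in `k^M(F)` for a unit `u` whose residue is a nonsquare. -/
theorem milnor_u_sq_eq_zero {F K : Type} [Field F] [CharZero F] [Field K] [Fintype K]
    (D : PadicData F K) (hodd : Odd (Fintype.card K))
    (u : Fˣ) (hu0 : D.v u = 0) (humem : (u : F) ∈ D.O)
    (hu : ¬ ∃ b : K, b * b = D.res ⟨(u : F), humem⟩) :
    kcls u * kcls u = 0 := by
  classical
  have hcard : Fintype.card K % 2 = 1 := Nat.odd_iff.mp hodd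
  -- u⁻¹ lies in O
  have hvinv : D.v u⁻¹ = 0 := by rw [v_inv D u, hu0, neg_zero]
  have hinvmem : ((u⁻¹ : Fˣ) : F) ∈ D.O := by
    rw [D.mem_O]
    intro h
    have he : Units.mk0 ((u⁻¹ : Fˣ) : F) h = u⁻¹ := Units.ext rfl
    rw [he, hvinv]
  -- residues
  have huw : D.res ⟨(u : F), humem⟩ * D.res ⟨((u⁻¹ : Fˣ) : F), hinvmem⟩ = 1 := by
    rw [← map_mul]
    have he : (⟨(u : F), humem⟩ * ⟨((u⁻¹ : Fˣ) : F), hinvmem⟩ : D.O) = 1 := by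
      ext; simp
    rw [he, map_one]
  have hru0 : D.res ⟨(u : F), humem⟩ ≠ 0 := by
    intro h; rw [h, zero_mul] at huw; exact zero_ne_one huw
  -- write the residue of u as a sum of two squares, first one nonzero
  obtain ⟨a, b, hab⟩ := FiniteField.exists_root_sum_quadratic
    (f := (Polynomial.X ^ 2 : Polynomial K))
    (g := Polynomial.X ^ 2 - Polynomial.C (D.res ⟨(u : F), humem⟩))
    (Polynomial.degree_X_pow 2)
    (Polynomial.degree_X_pow_sub_C (by norm_num) _) hcard
  simp only [Polynomial.eval_pow, Polynomial.eval_X, Polynomial.eval_sub,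
    Polynomial.eval_C] at hab
  obtain ⟨p, q, hp0, hpq⟩ : ∃ p q : K, p ≠ 0 ∧ p ^ 2 + q ^ 2 = D.res ⟨(u : F), humem⟩ := by
    by_cases ha : a = 0
    · refine ⟨b, a, ?_, by linear_combination hab⟩
      intro hb
      apply hru0
      have hr : D.res ⟨(u : F), humem⟩ = a ^ 2 + b ^ 2 := by linear_combination -hab
      rw [hr, ha, hb]
      ring
    · exact ⟨a, b, ha, by linear_combination hab⟩
  have hq0 : q ≠ 0 := by
    intro hq
    exact hu ⟨p, by linear_combination hpq - q * hq⟩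
  have hid : 1 + (q * p⁻¹) * (q * p⁻¹)
      = D.res ⟨(u : F), humem⟩ * (p⁻¹ * p⁻¹) := by
    field_simp
    linear_combination hpq
  -- lift y
  obtain ⟨Y', hY'⟩ := D.res_surj (q * p⁻¹)
  have hY0 : (Y' : F) ≠ 0 := by
    intro h
    apply mul_ne_zero hq0 (inv_ne_zero hp0)
    rw [← hY', show Y' = 0 from Subtype.ext h, map_zero]
  -- the element whose square root we take
  have hcO : (1 + (Y' : F) * (Y' : F)) * ((u⁻¹ : Fˣ) : F) ∈ D.O :=
    mul_mem (add_mem (one_mem _) (mul_mem Y'.2 Y'.2)) hinvmem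
  have hres_c : D.res ⟨(1 + (Y' : F) * (Y' : F)) * ((u⁻¹ : Fˣ) : F), hcO⟩ = p⁻¹ * p⁻¹ := by
    have he : (⟨(1 + (Y' : F) * (Y' : F)) * ((u⁻¹ : Fˣ) : F), hcO⟩ : D.O)
        = (1 + Y' * Y') * ⟨((u⁻¹ : Fˣ) : F), hinvmem⟩ := by ext; push_cast; ring
    rw [he, map_mul, map_add, map_one, map_mul, hY']
    linear_combination (p⁻¹ * p⁻¹) * huw
      + (D.res ⟨((u⁻¹ : Fˣ) : F), hinvmem⟩) * hid
  -- 2 is a unit of O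
  have h2O : (2 : F) ∈ D.O := by
    rw [show (2 : F) = 1 + 1 by norm_num]
    exact add_mem (one_mem _) (one_mem _)
  have hchar : ringChar K ≠ 2 := by
    intro h
    have := FiniteField.even_card_iff_char_two.mp h
    omega
  have h2K : (2 : K) ≠ 0 := by
    intro h
    have hdvd : ringChar K ∣ 2 :=
      (CharP.cast_eq_zero_iff K (ringChar K) 2).mp (by rw [Nat.cast_ofNat]; exact h)
    have hp : (ringChar K).Prime := CharP.char_is_prime K (ringChar K)
    exact hchar ((Nat.prime_dvd_prime_iff_eq hp Nat.prime_two).mp hdvd)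
  have hres2 : D.res ⟨(2 : F), h2O⟩ ≠ 0 := by
    have he : (⟨(2 : F), h2O⟩ : D.O) = 1 + 1 := by ext; push_cast; norm_num
    rw [he, map_add, map_one]
    intro h
    exact h2K (by linear_combination h)
  obtain ⟨h2ne, hv2⟩ := v_eq_zero_of_res_ne D h2O hres2
  -- Hensel lift
  obtain ⟨X, hX⟩ := hensel D h2ne hv2 hcO (inv_ne_zero hp0) hres_c
  have hc0 : (1 + (Y' : F) * (Y' : F)) * ((u⁻¹ : Fˣ) : F) ≠ 0 := by
    intro h
    apply mul_ne_zero (inv_ne_zero hp0) (inv_ne_zero hp0)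
    rw [← hres_c, show (⟨_, hcO⟩ : D.O) = 0 from Subtype.ext h, map_zero]
  have hX0 : X ≠ 0 := by
    intro h
    exact hc0 (by rw [← hX, h, mul_zero])
  have heq : (u : F) * (X * X) = 1 + (Y' : F) * (Y' : F) := by
    rw [hX]
    have := Units.mul_inv u
    linear_combination (1 + (Y' : F) * (Y' : F)) * this
  -- Milnor K-theory computation
  have hA1 : (1 : F) - ((u * Units.mk0 X hX0 * Units.mk0 X hX0 : Fˣ) : F) ≠ 0 := by
    have hAv : ((u * Units.mk0 X hX0 * Units.mk0 X hX0 : Fˣ) : F) = (u : F) * (X * X) := by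
      simp [mul_assoc]
    rw [hAv, heq]
    intro h
    exact mul_ne_zero hY0 hY0 (by linear_combination -h)
  have st := kcls_steinberg (u * Units.mk0 X hX0 * Units.mk0 X hX0) hA1
  have hkA : kcls (u * Units.mk0 X hX0 * Units.mk0 X hX0) = kcls u := by
    rw [kcls_mul, kcls_mul, add_assoc, milnor_add_self, add_zero]
  have hunit : Units.mk0 ((1 : F) - ((u * Units.mk0 X hX0 * Units.mk0 X hX0 : Fˣ) : F)) hA1
      = (-1) * Units.mk0 (Y' : F) hY0 * Units.mk0 (Y' : F) hY0 := by
    ext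
    simp only [Units.val_mul, Units.val_neg, Units.val_one, Units.val_mk0]
    linear_combination -heq
  have hneg1 : kcls u * kcls (-1 : Fˣ) = 0 := by
    rw [← hkA]
    rw [show kcls (-1 : Fˣ)
        = kcls (Units.mk0 ((1 : F) - ((u * Units.mk0 X hX0 * Units.mk0 X hX0 : Fˣ) : F)) hA1)
      from by rw [hunit, kcls_mul, kcls_mul, add_assoc, milnor_add_self, add_zero]]
    exact st
  -- {u}{-u} = 0 via the standard identity
  have hune : u ≠ 1 := by
    intro h
    apply hu
    refine ⟨1, ?_⟩
    have he : (⟨(u : F), humem⟩ : D.O) = 1 := by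
      have hu1 : (u : F) = 1 := by rw [h]; rfl
      exact Subtype.ext (by simpa using hu1)
    rw [he, map_one, one_mul]
  have h1u : (1 : F) - (u : F) ≠ 0 := by
    intro h
    apply hune
    apply Units.ext
    simp only [Units.val_one]
    linear_combination -h
  have h1ui : (1 : F) - ((u⁻¹ : Fˣ) : F) ≠ 0 := by
    intro h
    apply hune
    have he : (u⁻¹ : Fˣ) = 1 := by
      apply Units.ext
      simp only [Units.val_one]
      linear_combination -h
    rw [← inv_inv u, he, inv_one]
  have hBC : Units.mk0 ((1 : F) - (u : F)) h1u
      = (-1) * u * Units.mk0 ((1 : F) - ((u⁻¹ : Fˣ) : F)) h1ui := by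
    ext
    simp only [Units.val_mul, Units.val_neg, Units.val_one, Units.val_mk0]
    have := Units.mul_inv u
    linear_combination -this
  have st1 := kcls_steinberg u h1u
  have st2 := kcls_steinberg u⁻¹ h1ui
  rw [kcls_inv] at st2
  rw [hBC, kcls_mul, kcls_mul, mul_add, mul_add, hneg1, st2, zero_add, add_zero] at st1
  exact st1
end
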